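/- Let α be a type and let x, y, z be permutations of α, each of which is a transposition (a swap of two distinct points). Then the subgroup of the permutation group of α generated by x, y and z is solvable. (This is the Table 1 entry for G0 ≅ Aₙ and x a transposition: any three conjugates of a transposition generate a solvable group.) -/

import Mathlib

set_option maxRecDepth 40000
set_option linter.unusedSectionVars false

namespace ThreeSwapsAux

open Equiv
open scoped commutatorElement

/-! ### Solvability of `Perm (Fin 4)` by explicit derived series computation -/

private def A4list : List (Perm (Fin 4)) :=
  [⟨![0, 1, 2, 3], ![0, 1, 2, 3], by decide, by decide⟩,
   ⟨![0, 2, 3, 1], ![0, 3, 1, 2], by decide, by decide⟩,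
   ⟨![0, 3, 1, 2], ![0, 2, 3, 1], by decide, by decide⟩,
   ⟨![1, 0, 3, 2], ![1, 0, 3, 2], by decide, by decide⟩,
   ⟨![1, 2, 0, 3], ![2, 0, 1, 3], by decide, by decide⟩,
   ⟨![1, 3, 2, 0], ![3, 0, 2, 1], by decide, by decide⟩,
   ⟨![2, 0, 1, 3], ![1, 2, 0, 3], by decide, by decide⟩,
   ⟨![2, 1, 3, 0], ![3, 1, 0, 2], by decide, by decide⟩,
   ⟨![2, 3, 0, 1], ![2, 3, 0, 1], by decide, by decide⟩,
   ⟨![3, 0, 2, 1], ![1, 3, 2, 0], by decide, by decide⟩,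
   ⟨![3, 1, 0, 2], ![2, 1, 3, 0], by decide, by decide⟩,
   ⟨![3, 2, 1, 0], ![3, 2, 1, 0], by decide, by decide⟩]

private def V4list : List (Perm (Fin 4)) :=
  [⟨![0, 1, 2, 3], ![0, 1, 2, 3], by decide, by decide⟩,
   ⟨![1, 0, 3, 2], ![1, 0, 3, 2], by decide, by decide⟩,
   ⟨![2, 3, 0, 1], ![2, 3, 0, 1], by decide, by decide⟩,
   ⟨![3, 2, 1, 0], ![3, 2, 1, 0], by decide, by decide⟩]

private def A4 : Subgroup (Perm (Fin 4)) where
  carrier := {g | g ∈ A4list}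
  one_mem' := by decide
  mul_mem' := by intro a b ha hb; revert a b ha hb; decide
  inv_mem' := by intro a ha; revert a ha; decide

private def V4 : Subgroup (Perm (Fin 4)) where
  carrier := {g | g ∈ V4list}
  one_mem' := by decide
  mul_mem' := by intro a b ha hb; revert a b ha hb; decide
  inv_mem' := by intro a ha; revert a ha; decide

private theorem step1 : ⁅(⊤ : Subgroup (Perm (Fin 4))), ⊤⁆ ≤ A4 := by
  rw [Subgroup.commutator_le]
  intro g hg h hh
  clear hg hh
  show ⁅g, h⁆ ∈ A4list
  revert g h; decide

private theorem step2 : ⁅A4, A4⁆ ≤ V4 := by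
  rw [Subgroup.commutator_le]
  intro g hg h hh
  replace hg : g ∈ A4list := hg
  replace hh : h ∈ A4list := hh
  show ⁅g, h⁆ ∈ V4list
  revert g h hg hh; decide

private theorem step3 : ⁅V4, V4⁆ ≤ ⊥ := by
  rw [Subgroup.commutator_le]
  intro g hg h hh
  replace hg : g ∈ V4list := hg
  replace hh : h ∈ V4list := hh
  rw [Subgroup.mem_bot]
  revert g h hg hh; decide

theorem permFin4_solvable : IsSolvable (Perm (Fin 4)) := by
  refine ⟨⟨3, le_bot_iff.mp ?_⟩⟩
  have h1 : derivedSeries (Perm (Fin 4)) 1 ≤ A4 := by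
    rw [derivedSeries_one]; exact step1
  have h2 : derivedSeries (Perm (Fin 4)) 2 ≤ V4 :=
    le_trans (Subgroup.commutator_mono h1 h1) step2
  exact le_trans (Subgroup.commutator_mono h2 h2) step3

/-- Any permutation group on at most 4 points is solvable. -/
theorem perm_solvable_of_card_le {β : Type*} [Fintype β] (h : Fintype.card β ≤ 4) :
    IsSolvable (Perm β) := by
  have h' : Fintype.card β ≤ Fintype.card (Fin 4) := by simpa using h
  obtain ⟨ι⟩ := Function.Embedding.nonempty_of_card_le h'
  haveI : Group.IsSolvable (Perm (Fin 4)) := permFin4_solvable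
  exact solvable_of_solvable_injective (Equiv.Perm.viaEmbeddingHom_injective ι)

/-! ### The subgroup of permutations preserving `s` and `t` and fixing everything else -/

variable {α : Type*} [DecidableEq α]

/-- Permutations mapping `s` to `s`, `t` to `t`, and fixing all other points. -/
def fixSub (s t : Finset α) : Subgroup (Perm α) where
  carrier := {g | (∀ a, a ∈ s ↔ g a ∈ s) ∧ (∀ a, a ∈ t ↔ g a ∈ t) ∧
      ∀ a, a ∉ s → a ∉ t → g a = a}
  one_mem' := by simp
  mul_mem' := by
    rintro g h ⟨hg1, hg2, hg3⟩ ⟨hh1, hh2, hh3⟩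
    refine ⟨fun a => (hh1 a).trans (hg1 _), fun a => (hh2 a).trans (hg2 _), fun a has hat => ?_⟩
    show g (h a) = a
    rw [hh3 a has hat, hg3 a has hat]
  inv_mem' := by
    rintro g ⟨hg1, hg2, hg3⟩
    refine ⟨fun a => ?_, fun a => ?_, fun a has hat => ?_⟩
    · have := hg1 (g⁻¹ a); rwa [Equiv.Perm.coe_inv, Equiv.apply_symm_apply, iff_comm] at this
    · have := hg2 (g⁻¹ a); rwa [Equiv.Perm.coe_inv, Equiv.apply_symm_apply, iff_comm] at this
    · have hbs : g⁻¹ a ∉ s := fun h => by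
        have := (hg1 _).mp h; rw [Equiv.Perm.coe_inv, Equiv.apply_symm_apply] at this; exact has this
      have hbt : g⁻¹ a ∉ t := fun h => by
        have := (hg2 _).mp h; rw [Equiv.Perm.coe_inv, Equiv.apply_symm_apply] at this; exact hat this
      have hb : g (g⁻¹ a) = g⁻¹ a := hg3 _ hbs hbt
      rw [Equiv.Perm.coe_inv, Equiv.apply_symm_apply] at hb
      exact hb.symm

theorem fixSub_comm {s t : Finset α} {g : Perm α} (h : g ∈ fixSub s t) : g ∈ fixSub t s := by
  obtain ⟨h1, h2, h3⟩ := h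
  exact ⟨h2, h1, fun a hat has => h3 a has hat⟩

theorem swap_mem_fixSub_left {s t : Finset α} (hst : Disjoint s t) {u v : α}
    (hu : u ∈ s) (hv : v ∈ s) : Equiv.swap u v ∈ fixSub s t := by
  have hut : u ∉ t := Finset.disjoint_left.mp hst hu
  have hvt : v ∉ t := Finset.disjoint_left.mp hst hv
  refine ⟨fun a => ?_, fun a => ?_, fun a has hat => ?_⟩
  · by_cases hau : a = u
    · subst hau; rw [Equiv.swap_apply_left]; simp [hu, hv]
    by_cases hav : a = v
    · subst hav; rw [Equiv.swap_apply_right]; simp [hu, hv]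
    · rw [Equiv.swap_apply_of_ne_of_ne hau hav]
  · by_cases hau : a = u
    · subst hau; rw [Equiv.swap_apply_left]; simp [hut, hvt]
    by_cases hav : a = v
    · subst hav; rw [Equiv.swap_apply_right]; simp [hut, hvt]
    · rw [Equiv.swap_apply_of_ne_of_ne hau hav]
  · exact Equiv.swap_apply_of_ne_of_ne (fun h => has (h ▸ hu)) (fun h => has (h ▸ hv))

theorem swap_mem_fixSub_right {s t : Finset α} (hst : Disjoint s t) {u v : α}
    (hu : u ∈ t) (hv : v ∈ t) : Equiv.swap u v ∈ fixSub s t :=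
  fixSub_comm (swap_mem_fixSub_left hst.symm hu hv)

/-- Restriction homomorphism of `fixSub s t` to `Perm s × Perm t`. -/
def restrictHom (s t : Finset α) :
    fixSub s t →* Perm {a // a ∈ s} × Perm {a // a ∈ t} :=
  MonoidHom.mk'
    (fun g => (Equiv.Perm.subtypePerm g.1 (fun a => (g.2.1 a).symm), Equiv.Perm.subtypePerm g.1 (fun a => (g.2.2.1 a).symm)))
    (by
      intro g h
      refine Prod.ext ?_ ?_ <;>
        · ext a
          simp [Equiv.Perm.subtypePerm])

theorem restrictHom_injective (s t : Finset α) : Function.Injective (restrictHom s t) := by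
  intro g h hgh
  have h1 := congrArg Prod.fst hgh
  have h2 := congrArg Prod.snd hgh
  refine Subtype.ext (Equiv.ext fun a => ?_)
  by_cases has : a ∈ s
  · have := congrFun (congrArg (fun (e : Perm {a // a ∈ s}) => (e : {a // a ∈ s} → _))
      h1) ⟨a, has⟩
    exact congrArg Subtype.val this
  by_cases hat : a ∈ t
  · have := congrFun (congrArg (fun (e : Perm {a // a ∈ t}) => (e : {a // a ∈ t} → _))
      h2) ⟨a, hat⟩
    exact congrArg Subtype.val this
  · rw [g.2.2.2 a has hat, h.2.2.2 a has hat]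

theorem fixSub_solvable (s t : Finset α) (hs : s.card ≤ 4) (ht : t.card ≤ 4) :
    IsSolvable (fixSub s t) := by
  haveI : Group.IsSolvable (Perm {a // a ∈ s}) :=
    perm_solvable_of_card_le (by rwa [Fintype.card_coe])
  haveI : Group.IsSolvable (Perm {a // a ∈ t}) :=
    perm_solvable_of_card_le (by rwa [Fintype.card_coe])
  exact solvable_of_solvable_injective (restrictHom_injective s t)

theorem aux (s t : Finset α) (hs : s.card ≤ 4) (ht : t.card ≤ 4)
    (x y z : Perm α) (hx : x ∈ fixSub s t) (hy : y ∈ fixSub s t) (hz : z ∈ fixSub s t) :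
    IsSolvable (Subgroup.closure {x, y, z}) := by
  have hle : Subgroup.closure {x, y, z} ≤ fixSub s t := by
    rw [Subgroup.closure_le]
    intro g hg
    simp only [Set.mem_insert_iff, Set.mem_singleton_iff] at hg
    rcases hg with rfl | rfl | rfl <;> assumption
  haveI : Group.IsSolvable (fixSub s t) := fixSub_solvable s t hs ht
  exact solvable_of_solvable_injective (Subgroup.inclusion_injective hle)

theorem card_pair_le (p q : α) : ({p, q} : Finset α).card ≤ 2 :=
  (Finset.card_insert_le _ _).trans (by simp)

end ThreeSwapsAux

open ThreeSwapsAux in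
/-- **Table 1, `G0 ≅ Aₙ`, transposition entry.** Any three transpositions in a
permutation group generate a solvable group. -/
theorem isSolvable_closure_of_three_swaps
    (α : Type*) [DecidableEq α] (x y z : Equiv.Perm α)
    (hx : x.IsSwap) (hy : y.IsSwap) (hz : z.IsSwap) :
    IsSolvable (Subgroup.closure {x, y, z}) := by
  obtain ⟨a, b, hab, rfl⟩ := hx
  obtain ⟨c, d, hcd, rfl⟩ := hy
  obtain ⟨e, f, hef, rfl⟩ := hz
  set sx : Finset α := {a, b} with hsx
  set sy : Finset α := {c, d} with hsy
  set sz : Finset α := {e, f} with hsz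
  have cx : sx.card ≤ 2 := card_pair_le a b
  have cy : sy.card ≤ 2 := card_pair_le c d
  have cz : sz.card ≤ 2 := card_pair_le e f
  have hma : a ∈ sx := by simp [hsx]
  have hmb : b ∈ sx := by simp [hsx]
  have hmc : c ∈ sy := by simp [hsy]
  have hmd : d ∈ sy := by simp [hsy]
  have hme : e ∈ sz := by simp [hsz]
  have hmf : f ∈ sz := by simp [hsz]
  by_cases h1 : (sx ∩ sy).Nonempty
  · have hcxy : (sx ∪ sy).card ≤ 3 := by
      have := Finset.card_union_add_card_inter sx sy
      have := h1.card_pos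
      omega
    by_cases h2 : ((sx ∪ sy) ∩ sz).Nonempty
    · -- everything in one block of size ≤ 4
      have hcU : (sx ∪ sy ∪ sz).card ≤ 4 := by
        have := Finset.card_union_add_card_inter (sx ∪ sy) sz
        have := h2.card_pos
        omega
      refine aux (sx ∪ sy ∪ sz) ∅ hcU (by simp) _ _ _ ?_ ?_ ?_ <;>
        exact swap_mem_fixSub_left (Finset.disjoint_empty_right _)
          (by simp [hma, hmb, hmc, hmd, hme, hmf, Finset.mem_union])
          (by simp [hma, hmb, hmc, hmd, hme, hmf, Finset.mem_union])
    · have hd : Disjoint (sx ∪ sy) sz := by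
        rw [Finset.disjoint_iff_inter_eq_empty, ← Finset.not_nonempty_iff_eq_empty]
        exact h2
      refine aux (sx ∪ sy) sz (hcxy.trans (by norm_num)) (cz.trans (by norm_num)) _ _ _
        ?_ ?_ ?_
      · exact swap_mem_fixSub_left hd (by simp [hma, Finset.mem_union])
          (by simp [hmb, Finset.mem_union])
      · exact swap_mem_fixSub_left hd (by simp [hmc, Finset.mem_union])
          (by simp [hmd, Finset.mem_union])
      · exact swap_mem_fixSub_right hd hme hmf
  · have hdxy : Disjoint sx sy := by
      rw [Finset.disjoint_iff_inter_eq_empty, ← Finset.not_nonempty_iff_eq_empty]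
      exact h1
    by_cases h2 : (sx ∩ sz).Nonempty
    · have hcxz : (sx ∪ sz).card ≤ 3 := by
        have := Finset.card_union_add_card_inter sx sz
        have := h2.card_pos
        omega
      by_cases h3 : ((sx ∪ sz) ∩ sy).Nonempty
      · have hcU : (sx ∪ sz ∪ sy).card ≤ 4 := by
          have := Finset.card_union_add_card_inter (sx ∪ sz) sy
          have := h3.card_pos
          omega
        refine aux (sx ∪ sz ∪ sy) ∅ hcU (by simp) _ _ _ ?_ ?_ ?_ <;>
          exact swap_mem_fixSub_left (Finset.disjoint_empty_right _)
            (by simp [hma, hmb, hmc, hmd, hme, hmf, Finset.mem_union])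
            (by simp [hma, hmb, hmc, hmd, hme, hmf, Finset.mem_union])
      · have hd : Disjoint (sx ∪ sz) sy := by
          rw [Finset.disjoint_iff_inter_eq_empty, ← Finset.not_nonempty_iff_eq_empty]
          exact h3
        refine aux (sx ∪ sz) sy (hcxz.trans (by norm_num)) (cy.trans (by norm_num)) _ _ _
          ?_ ?_ ?_
        · exact swap_mem_fixSub_left hd (by simp [hma, Finset.mem_union])
            (by simp [hmb, Finset.mem_union])
        · exact swap_mem_fixSub_right hd hmc hmd
        · exact swap_mem_fixSub_left hd (by simp [hme, Finset.mem_union])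
            (by simp [hmf, Finset.mem_union])
    · -- sx is disjoint from both sy and sz
      have hdxz : Disjoint sx sz := by
        rw [Finset.disjoint_iff_inter_eq_empty, ← Finset.not_nonempty_iff_eq_empty]
        exact h2
      have hd : Disjoint (sy ∪ sz) sx := by
        rw [Finset.disjoint_union_left]
        exact ⟨hdxy.symm, hdxz.symm⟩
      have hcyz : (sy ∪ sz).card ≤ 4 :=
        (Finset.card_union_le _ _).trans (by omega)
      refine aux (sy ∪ sz) sx hcyz (cx.trans (by norm_num)) _ _ _ ?_ ?_ ?_
      · exact swap_mem_fixSub_right hd hma hmb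
      · exact swap_mem_fixSub_left hd (by simp [hmc, Finset.mem_union])
          (by simp [hmd, Finset.mem_union])
      · exact swap_mem_fixSub_left hd (by simp [hme, Finset.mem_union])
          (by simp [hmf, Finset.mem_union])
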